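/- A finite transitive frame validates the scheme C_n if and only if it has circumference at most n. -/

import Mathlib

/-- Modal formulas: variables, ⊤, ¬, ∧, □. -/
inductive Fml : Type
  | var : ℕ → Fml
  | top : Fml
  | neg : Fml → Fml
  | and : Fml → Fml → Fml
  | box : Fml → Fml
deriving DecidableEq

namespace Fml
/-- Material implication, defined from ¬ and ∧. -/
def imp (φ ψ : Fml) : Fml := .neg (.and φ (.neg ψ))
/-- Disjunction. -/
def or (φ ψ : Fml) : Fml := .neg (.and (.neg φ) (.neg ψ))
/-- ◇φ := ¬□¬φ. -/
def dia (φ : Fml) : Fml := .neg (.box (.neg φ))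
/-- □*φ := φ ∧ □φ. -/
def boxs (φ : Fml) : Fml := .and φ (.box φ)
/-- ◇*φ := φ ∨ ◇φ. -/
def dias (φ : Fml) : Fml := Fml.or φ (dia φ)
end Fml

/-- Kripke satisfaction. -/
def sat {W : Type} (R : W → W → Prop) (V : ℕ → Set W) : W → Fml → Prop
  | x, .var p => x ∈ V p
  | _, .top => True
  | x, .neg φ => ¬ sat R V x φ
  | x, .and φ ψ => sat R V x φ ∧ sat R V x ψ
  | x, .box φ => ∀ y, R x y → sat R V y φ

/-- P_n(φ0; φ1,...,φn): P_0(φ0) = ◇φ0, P_n(φ0,φ1,...,φn) = ◇(φ1 ∧ P_{n-1}(φ0,φ2,...,φn)). -/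
def Pfml (φ0 : Fml) : List Fml → Fml
  | [] => φ0.dia
  | ψ :: rest => (Fml.and ψ (Pfml φ0 rest)).dia

/-- Conjunction of ¬(φ ∧ ψ) for ψ in the list. -/
def conjNeg (φ : Fml) : List Fml → Fml
  | [] => .top
  | ψ :: rest => .and (.neg (.and φ ψ)) (conjNeg φ rest)

/-- D_n: pairwise disjointness conjunction ⋀_{i<j} ¬(φ_i ∧ φ_j). -/
def Dfml : List Fml → Fml
  | [] => .top
  | φ :: rest => .and (conjNeg φ rest) (Dfml rest)

/-- The scheme C_n instance on φ0,φ1,...,φn (φs = [φ1,...,φn]). -/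
def Cfml (φ0 : Fml) (φs : List Fml) : Fml :=
  ((Dfml (φ0 :: φs)).boxs).imp ((φ0.dia).imp ((Fml.and φ0 (Fml.neg (Pfml φ0 φs))).dia))

/-- The scheme C_n* instance: as C_n but with ◇* in the consequent. -/
def CfmlStar (φ0 : Fml) (φs : List Fml) : Fml :=
  ((Dfml (φ0 :: φs)).boxs).imp ((φ0.dia).imp ((Fml.and φ0 (Fml.neg (Pfml φ0 φs))).dias))

/-- An ascending R-chain. -/
def AscChain {W : Type} (R : W → W → Prop) (x : ℕ → W) : Prop := ∀ m, R (x m) (x (m+1))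

/-- A strictly ascending R-chain. -/
def StrictAscChain {W : Type} (R : W → W → Prop) (x : ℕ → W) : Prop :=
  AscChain R x ∧ ∀ m, ¬ R (x (m+1)) (x m)

/-- The R-cluster of x. -/
def cluster {W : Type} (R : W → W → Prop) (x : W) : Set W := {y | x = y ∨ (R x y ∧ R y x)}

/-- The frame has a cycle of length k (k ≥ 1): k distinct points x_0 R x_1 R ... R x_{k-1} R x_0. -/
def HasCycle {W : Type} (R : W → W → Prop) (k : ℕ) : Prop :=
  1 ≤ k ∧ ∃ x : ℕ → W, (∀ i j, i < k → j < k → x i = x j → i = j) ∧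
    ∀ i < k, R (x i) (x ((i+1) % k))

/-- Circumference at most n: every cycle has length ≤ n. -/
def CircumLE {W : Type} (R : W → W → Prop) (n : ℕ) : Prop := ∀ k, HasCycle R k → k ≤ n

/-- The frame (W,R) validates the scheme C_n. -/
def ValidatesCn {W : Type} (R : W → W → Prop) (n : ℕ) : Prop :=
  ∀ (V : ℕ → Set W) (x : W) (φ0 : Fml) (φs : List Fml), φs.length = n →
    sat R V x (Cfml φ0 φs)

/-- A Boolean valuation on formulas (box-formulas and variables as atoms). -/
def BoolEval (w : Fml → Bool) : Prop :=
  w .top = true ∧ (∀ φ, w (.neg φ) = !w φ) ∧ (∀ φ ψ, w (.and φ ψ) = (w φ && w ψ))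

/-- Propositional tautologies. -/
def Tautology (φ : Fml) : Prop := ∀ w, BoolEval w → w φ = true

/-- Theorems of the smallest normal modal logic containing the axiom set Ax. -/
inductive Prov (Ax : Set Fml) : Fml → Prop
  | taut {φ} : Tautology φ → Prov Ax φ
  | kax (φ ψ) : Prov Ax ((Fml.box (φ.imp ψ)).imp ((Fml.box φ).imp (Fml.box ψ)))
  | ax {φ} : φ ∈ Ax → Prov Ax φ
  | mp {φ ψ} : Prov Ax (φ.imp ψ) → Prov Ax φ → Prov Ax ψ
  | nec {φ} : Prov Ax φ → Prov Ax (.box φ)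

/-- All instances of the transitivity scheme 4. -/
def Ax4 : Set Fml := {χ | ∃ φ, χ = (Fml.box φ).imp (Fml.box (Fml.box φ))}

/-- Axioms of K4C_n: scheme 4 together with all instances of scheme C_n. -/
def AxK4C (n : ℕ) : Set Fml :=
  Ax4 ∪ {χ | ∃ (φ0 : Fml) (φs : List Fml), φs.length = n ∧ χ = Cfml φ0 φs}


section Helpers
variable {W : Type} {R : W → W → Prop} {V : ℕ → Set W}

lemma sat_imp {x : W} {φ ψ : Fml} : sat R V x (φ.imp ψ) ↔ (sat R V x φ → sat R V x ψ) := by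
  simp [Fml.imp, sat]

lemma sat_dia {x : W} {φ : Fml} : sat R V x φ.dia ↔ ∃ y, R x y ∧ sat R V y φ := by
  simp [Fml.dia, sat]

lemma sat_boxs {x : W} {φ : Fml} :
    sat R V x φ.boxs ↔ sat R V x φ ∧ ∀ y, R x y → sat R V y φ := by
  simp [Fml.boxs, sat]

lemma sat_conjNeg {x : W} {φ : Fml} {L : List Fml} :
    sat R V x (conjNeg φ L) ↔ ∀ ψ ∈ L, ¬(sat R V x φ ∧ sat R V x ψ) := by
  induction L with
  | nil => simp [conjNeg, sat]
  | cons ψ rest ih => simp [conjNeg, sat, ih]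

lemma sat_and {x : W} {φ ψ : Fml} : sat R V x (φ.and ψ) ↔ sat R V x φ ∧ sat R V x ψ := Iff.rfl

lemma sat_Dfml {x : W} {L : List Fml} :
    sat R V x (Dfml L) ↔ ∀ i j, ∀ (hij : i < j) (hj : j < L.length),
      ¬(sat R V x (L[i]'(lt_trans hij hj)) ∧ sat R V x L[j]) := by
  induction L with
  | nil => simp [Dfml, sat]
  | cons φ rest ih =>
    simp only [Dfml, sat, sat_conjNeg, ih, List.length_cons]
    constructor
    · rintro ⟨h1, h2⟩ i j hij hj
      match i, j with
      | 0, (j+1) =>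
        simp only [List.getElem_cons_zero, List.getElem_cons_succ]
        exact h1 _ (rest.getElem_mem _)
      | (i+1), (j+1) =>
        simp only [List.getElem_cons_succ]
        exact h2 i j (by omega) (by omega)
    · intro h
      refine ⟨?_, fun i j hij hj => ?_⟩
      · intro ψ hψ
        obtain ⟨j, hj, rfl⟩ := List.getElem_of_mem hψ
        exact h 0 (j+1) (by omega) (by omega)
      · exact h (i+1) (j+1) (by omega) (by omega)

lemma sat_Pfml {φ0 : Fml} {L : List Fml} {x : W} :
    sat R V x (Pfml φ0 L) ↔ ∃ z : ℕ → W, R x (z 0) ∧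
      (∀ i < L.length, R (z i) (z (i+1))) ∧
      (∀ i, ∀ (h : i < L.length), sat R V (z i) L[i]) ∧
      sat R V (z L.length) φ0 := by
  induction L generalizing x with
  | nil =>
    simp only [Pfml, sat_dia, List.length_nil]
    constructor
    · rintro ⟨y, hy, hs⟩; exact ⟨fun _ => y, hy, by omega, by omega, hs⟩
    · rintro ⟨z, hz, _, _, hs⟩; exact ⟨z 0, hz, hs⟩
  | cons ψ rest ih =>
    simp only [Pfml, sat_dia, sat_and, ih, List.length_cons]
    constructor
    · rintro ⟨y, hxy, hψ, z, hz0, hedge, hsat, hend⟩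
      refine ⟨fun i => if i = 0 then y else z (i-1), by simpa, ?_, ?_, by simpa using hend⟩
      · intro i hi
        match i with
        | 0 => simpa using hz0
        | (i+1) => simpa using hedge i (by omega)
      · intro i hi
        match i with
        | 0 => simpa using hψ
        | (i+1) => simpa using hsat i (by omega)
    · rintro ⟨z, hz0, hedge, hsat, hend⟩
      refine ⟨z 0, hz0, by simpa using hsat 0 (by omega), fun i => z (i+1),
        hedge 0 (by omega), fun i hi => hedge (i+1) (by omega),
        fun i hi => by have := hsat (i+1) (by simpa using hi); rw [List.getElem_cons_succ] at this; exact this, hend⟩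
end Helpers

lemma dir1 {W : Type} (R : W → W → Prop) (hT : Transitive R) (n : ℕ)
    (hval : ValidatesCn R n) : CircumLE R n := by
  intro k hcyc
  by_contra hkn
  push_neg at hkn
  obtain ⟨hk1, x, hinj, hedge⟩ := hcyc
  have A : ∀ m i, i < k → R (x i) (x ((i + m + 1) % k)) := by
    intro m
    induction m with
    | zero =>
      intro i hi
      simpa using hedge i hi
    | succ m ih =>
      intro i hi
      have h1 := ih i hi
      have h2 := hedge ((i + m + 1) % k) (Nat.mod_lt _ (by omega))
      rw [Nat.mod_add_mod] at h2
      have h3 := hT h1 h2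
      have e : i + m + 1 + 1 = i + (m + 1) + 1 := by omega
      rwa [e] at h3
  have reach : ∀ i j, i < k → j < k → R (x i) (x j) := by
    intro i j hi hj
    have h1 := A (j + k - i - 1) i hi
    have e : i + (j + k - i - 1) + 1 = j + k := by omega
    rw [e, Nat.add_mod_right, Nat.mod_eq_of_lt hj] at h1
    exact h1
  set V : ℕ → Set W := fun p => {w | ∃ j, j < k ∧ w = x j ∧ min j n = p} with hV
  set φs : List Fml := (List.range n).map (fun i => Fml.var (i + 1)) with hφs
  have hflen : φs.length = n := by simp [hφs]
  have hvar : ∀ (w : W) (p : ℕ), sat R V w (.var p) ↔ ∃ j, j < k ∧ w = x j ∧ min j n = p := by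
    intro w p
    simp [sat, hV]
  have hget : ∀ i, ∀ h : i < (Fml.var 0 :: φs).length, (Fml.var 0 :: φs)[i] = Fml.var i := by
    intro i h
    match i with
    | 0 => rfl
    | (i+1) =>
      simp only [hφs, List.length_cons, List.length_map, List.length_range] at h
      simp [hφs]
  have hD : ∀ w, sat R V w (Dfml (Fml.var 0 :: φs)) := by
    intro w
    rw [sat_Dfml]
    intro i j hij hj
    rw [hget i _, hget j _]
    rintro ⟨h1, h2⟩
    rw [hvar] at h1 h2
    obtain ⟨a, ha, rfl, hma⟩ := h1
    obtain ⟨b, hb, hab, hmb⟩ := h2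
    have : a = b := hinj a b ha hb hab
    omega
  have H := hval V (x 0) (.var 0) φs hflen
  simp only [Cfml, sat_imp] at H
  have H1 : sat R V (x 0) (Dfml (Fml.var 0 :: φs)).boxs :=
    sat_boxs.2 ⟨hD _, fun y _ => hD y⟩
  have H2 : sat R V (x 0) (Fml.var 0).dia :=
    sat_dia.2 ⟨x 0, reach 0 0 (by omega) (by omega), (hvar _ _).2 ⟨0, by omega, rfl, by omega⟩⟩
  have H3 := H H1 H2
  rw [sat_dia] at H3
  obtain ⟨y, hxy, hy⟩ := H3
  obtain ⟨hy0, hyP⟩ := hy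
  rw [hvar] at hy0
  obtain ⟨j, hj, rfl, hmj⟩ := hy0
  apply hyP
  rw [sat_Pfml]
  refine ⟨fun i => if i < n then x (i + 1) else x j, ?_, ?_, ?_, ?_⟩
  · by_cases h0 : 0 < n
    · simpa [h0] using reach j 1 hj (by omega)
    · simpa [h0] using reach j j hj hj
  · intro i hi
    rw [hflen] at hi
    by_cases h1 : i + 1 < n
    · simpa [hi, h1] using reach (i + 1) (i + 2) (by omega) (by omega)
    · simpa [hi, h1] using reach (i + 1) j (by omega) hj
  · intro i hi
    rw [hflen] at hi
    have e : φs[i]'(by omega) = Fml.var (i + 1) := by simp [hφs]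
    rw [e, hvar]
    exact ⟨i + 1, by omega, by simp [hi], by omega⟩
  · rw [hflen]
    simp only [lt_irrefl, if_false]
    exact (hvar _ _).2 ⟨j, hj, rfl, hmj⟩

lemma dir2 {W : Type} [Finite W] (R : W → W → Prop) (hT : Transitive R) (n : ℕ)
    (hcirc : CircumLE R n) : ValidatesCn R n := by
  intro V x φ0 φs hlen
  subst hlen
  simp only [Cfml, sat_imp]
  intro hDbox h0
  rw [sat_dia] at h0
  rw [sat_dia]
  by_contra hcon
  push_neg at hcon
  obtain ⟨y0, hxy0, hy0⟩ := h0
  rw [sat_boxs] at hDbox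
  have hDall : ∀ w, R x w → sat R V w (Dfml (φ0 :: φs)) := hDbox.2
  have hP : ∀ y : W, R x y → sat R V y φ0 → sat R V y (Pfml φ0 φs) := by
    intro y hy hs
    by_contra hns
    exact hcon y hy ⟨hs, hns⟩
  let S := {y : W // R x y ∧ sat R V y φ0}
  have hchain : ∀ y : S, ∃ z : ℕ → W, R y.1 (z 0) ∧ (∀ i < φs.length, R (z i) (z (i + 1))) ∧
      (∀ i, ∀ h : i < φs.length, sat R V (z i) (φs[i]'h)) ∧ sat R V (z φs.length) φ0 := by
    intro y
    have := hP y.1 y.2.1 y.2.2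
    rwa [sat_Pfml] at this
  choose z hz0 hze hzs hzend using hchain
  have hyz : ∀ (y : S) (i : ℕ), i ≤ φs.length → R y.1 (z y i) := by
    intro y i hi
    induction i with
    | zero => exact hz0 y
    | succ i ih => exact hT (ih (by omega)) (hze y i (by omega))
  have hxz : ∀ (y : S) (i : ℕ), i ≤ φs.length → R x (z y i) := fun y i hi => hT y.2.1 (hyz y i hi)
  let g : S → S := fun y => ⟨z y φs.length, hxz y φs.length le_rfl, hzend y⟩
  have hgR : ∀ y : S, R y.1 (g y).1 := fun y => hyz y φs.length le_rfl
  have hgRk : ∀ (y : S) (m : ℕ), R y.1 (g^[m + 1] y).1 := by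
    intro y m
    induction m with
    | zero => simpa using hgR y
    | succ m ih =>
      rw [Function.iterate_succ_apply']
      exact hT ih (hgR _)
  obtain ⟨a, b, hab, he⟩ :=
    Finite.exists_ne_map_eq_of_infinite (fun i : ℕ => g^[i] ⟨y0, hxy0, hy0⟩)
  have key : ∃ (ys : S) (m : ℕ), 1 ≤ m ∧ g^[m] ys = ys := by
    rcases hab.lt_or_gt with h | h
    · refine ⟨g^[a] ⟨y0, hxy0, hy0⟩, b - a, by omega, ?_⟩
      rw [← Function.iterate_add_apply, show b - a + a = b by omega]
      exact he.symm
    · refine ⟨g^[b] ⟨y0, hxy0, hy0⟩, a - b, by omega, ?_⟩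
      rw [← Function.iterate_add_apply, show a - b + b = a by omega]
      exact he
  obtain ⟨ys, m, hm, hfix⟩ := key
  have hlast : R (g ys).1 ys.1 ∨ g ys = ys := by
    by_cases hm2 : m = 1
    · right
      conv_rhs => rw [← hfix, hm2, Function.iterate_one]
    · left
      have h1 := hgRk (g ys) (m - 2)
      rw [show m - 2 + 1 = m - 1 by omega] at h1
      have e : g^[m - 1] (g ys) = ys := by
        rw [← Function.iterate_succ_apply, Nat.succ_eq_add_one,
          show m - 1 + 1 = m by omega, hfix]
      rwa [e] at h1
  set c : ℕ → W := fun i => if i = 0 then ys.1 else z ys (i - 1) with hc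
  have hsucc : ∀ i, i < φs.length + 1 → R x (c i) := by
    intro i hi
    match i with
    | 0 => exact ys.2.1
    | (i+1) => simpa [hc] using hxz ys i (by omega)
  have hsat : ∀ i, ∀ h : i < (φ0 :: φs).length, sat R V (c i) ((φ0 :: φs)[i]) := by
    intro i h
    match i with
    | 0 => exact ys.2.2
    | (i+1) =>
      simp only [List.length_cons] at h
      simpa [hc] using hzs ys i (by omega)
  have hdist : ∀ i j, i < φs.length + 1 → j < φs.length + 1 → c i = c j → i = j := by
    have key2 : ∀ i j, i < j → j < φs.length + 1 → c i ≠ c j := by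
      intro i j hij hj hceq
      have hD := sat_Dfml.1 (hDall (c i) (hsucc i (by omega)))
      have h2 := hsat j (by simp; omega)
      rw [← hceq] at h2
      exact hD i j hij (by simp; omega) ⟨hsat i (by simp; omega), h2⟩
    intro i j hi hj hceq
    rcases lt_trichotomy i j with h | h | h
    · exact absurd hceq (key2 i j h hj)
    · exact h
    · exact absurd hceq.symm (key2 j i h hi)
  have hedges : ∀ i, i < φs.length + 1 → R (c i) (c ((i + 1) % (φs.length + 1))) := by
    intro i hi
    by_cases hin : i = φs.length
    · subst hin
      rw [Nat.mod_self]
      have h1 : R (c φs.length) (z ys φs.length) := by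
        by_cases h0 : φs.length = 0
        · rw [h0]
          simpa [hc, h0] using hz0 ys
        · have h2 := hze ys (φs.length - 1) (by omega)
          rw [show φs.length - 1 + 1 = φs.length by omega] at h2
          simpa [hc, h0] using h2
      have hgz : (g ys).1 = z ys φs.length := rfl
      rcases hlast with h2 | h2
      · rw [hgz] at h2
        have h3 := hT h1 h2
        simpa [hc] using h3
      · have h4 : z ys φs.length = ys.1 := by rw [← hgz, h2]
        rw [h4] at h1
        simpa [hc] using h1
    · rw [Nat.mod_eq_of_lt (by omega)]
      by_cases h0 : i = 0
      · subst h0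
        simpa [hc] using hz0 ys
      · have := hze ys (i - 1) (by omega)
        rw [show i - 1 + 1 = i by omega] at this
        simpa [hc, h0] using this
  have hcyc : HasCycle R (φs.length + 1) := ⟨by omega, c, hdist, hedges⟩
  have := hcirc (φs.length + 1) hcyc
  omega

/-- a finite transitive frame validates C_n iff it has circumference
at most n. -/
theorem stmt6 {W : Type} [Finite W] (R : W → W → Prop) (hT : Transitive R) (n : ℕ) :
    ValidatesCn R n ↔ CircumLE R n := by
  exact ⟨dir1 R hT n, dir2 R hT n⟩
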